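/- Fix an integer T ≥ 1. The resetting closed loop satisfies quadratic performance specified by P if and only if the lifted reset system η(k+1) = Ã_r η(k) + B̃ w̃(k), z̃(k) = C̃_r η(k) + D̃ w̃(k) satisfies quadratic performance specified by P̃, where Ã_r := A^{T−1} A_r, B̃ := [A^{T−1}B, …, B], C̃_r ∈ ℝ^{Tq×n} has block rows C, C A_r, C A A_r, …, C A^{T−2} A_r, and D̃ is block lower triangular with (i,j) block D if i = j, C A^{i−j−1} B if i > j, 0 if i < j. -/

import Mathlib

open Matrix Filter Topology Kronecker

/-- Trajectories of a discrete-time LTI system. -/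
def IsTraj {St In Out : Type*} [Fintype St] [Fintype In] [Fintype Out]
    (A : Matrix St St ℝ) (B : Matrix St In ℝ) (C : Matrix Out St ℝ) (D : Matrix Out In ℝ)
    (x : ℕ → St → ℝ) (u : ℕ → In → ℝ) (y : ℕ → Out → ℝ) : Prop :=
  ∀ t : ℕ, x (t + 1) = A.mulVec (x t) + B.mulVec (u t) ∧
    y t = C.mulVec (x t) + D.mulVec (u t)

/-- The LTI system satisfies quadratic performance specified by `Π`. -/
def QuadPerf {St In Out : Type*} [Fintype St] [Fintype In] [Fintype Out]
    (A : Matrix St St ℝ) (B : Matrix St In ℝ) (C : Matrix Out St ℝ) (D : Matrix Out In ℝ)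
    (P : Matrix (In ⊕ Out) (In ⊕ Out) ℝ) : Prop :=
  (∀ x : ℕ → St → ℝ, (∀ t : ℕ, x (t + 1) = A.mulVec (x t)) →
      Tendsto x atTop (𝓝 0)) ∧
  ∃ ε > (0 : ℝ), ∀ x u y, IsTraj A B C D x u y → x 0 = 0 →
    Summable (fun t => u t ⬝ᵥ u t) →
    ∃ l : ℝ,
      Tendsto (fun N => ∑ t ∈ Finset.range N,
        Sum.elim (u t) (y t) ⬝ᵥ P.mulVec (Sum.elim (u t) (y t))) atTop (𝓝 l) ∧
      l ≤ -ε * ∑' t, u t ⬝ᵥ u t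

/-- Lifted input matrix `B̃ = [A^{T-1}B, A^{T-2}B, …, B]`. -/
noncomputable def Btil {St : Type*} [Fintype St] [DecidableEq St] {m : ℕ} (T : ℕ)
    (A : Matrix St St ℝ) (B : Matrix St (Fin m) ℝ) : Matrix St (Fin T × Fin m) ℝ :=
  Matrix.of fun i p => (A ^ (T - 1 - (p.1 : ℕ)) * B) i p.2

/-- Lifted feedthrough matrix `D̃`, block lower triangular with `(i,j)` block `D` if
`i = j`, `C A^{i-j-1} B` if `i > j`, and `0` if `i < j`. -/
noncomputable def Dtil {St : Type*} [Fintype St] [DecidableEq St] {m q : ℕ} (T : ℕ)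
    (A : Matrix St St ℝ) (B : Matrix St (Fin m) ℝ) (C : Matrix (Fin q) St ℝ)
    (D : Matrix (Fin q) (Fin m) ℝ) : Matrix (Fin T × Fin q) (Fin T × Fin m) ℝ :=
  Matrix.of fun p r =>
    if (p.1 : ℕ) = (r.1 : ℕ) then D p.2 r.2
    else if (r.1 : ℕ) < (p.1 : ℕ) then
      (C * A ^ ((p.1 : ℕ) - (r.1 : ℕ) - 1) * B) p.2 r.2
    else 0

/-- The lifted performance matrix `P̃ = [[I_T ⊗ Q, I_T ⊗ S], [I_T ⊗ Sᵀ, I_T ⊗ R]]`. -/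
noncomputable def Ptil {m q : ℕ} (T : ℕ) (Q : Matrix (Fin m) (Fin m) ℝ)
    (S : Matrix (Fin m) (Fin q) ℝ) (R : Matrix (Fin q) (Fin q) ℝ) :
    Matrix ((Fin T × Fin m) ⊕ (Fin T × Fin q)) ((Fin T × Fin m) ⊕ (Fin T × Fin q)) ℝ :=
  Matrix.fromBlocks ((1 : Matrix (Fin T) (Fin T) ℝ) ⊗ₖ Q)
    ((1 : Matrix (Fin T) (Fin T) ℝ) ⊗ₖ S)
    ((1 : Matrix (Fin T) (Fin T) ℝ) ⊗ₖ Sᵀ)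
    ((1 : Matrix (Fin T) (Fin T) ℝ) ⊗ₖ R)

/-- The uncertainty input matrix `B_u = [0; A_c]`. -/
noncomputable def Bu {n₁ n₂ : ℕ} (A : Matrix (Fin n₁ ⊕ Fin n₂) (Fin n₁ ⊕ Fin n₂) ℝ) :
    Matrix (Fin n₁ ⊕ Fin n₂) (Fin n₂) ℝ :=
  Matrix.of fun i j =>
    Sum.elim (fun _ : Fin n₁ => (0 : ℝ)) (fun i₂ => A (Sum.inr i₂) (Sum.inr j)) i

/-- The matrix `C_u = [0, I]` selecting the controller state. -/
noncomputable def Cu (n₁ n₂ : ℕ) : Matrix (Fin n₂) (Fin n₁ ⊕ Fin n₂) ℝ :=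
  Matrix.of fun i j =>
    Sum.elim (fun _ : Fin n₁ => (0 : ℝ)) (fun j₂ => if i = j₂ then 1 else 0) j

/-- The reset state matrix `A_r = A - B_u C_u`, i.e. `A` with its lower-right
controller block replaced by `0`. -/
noncomputable def Ar {n₁ n₂ : ℕ} (A : Matrix (Fin n₁ ⊕ Fin n₂) (Fin n₁ ⊕ Fin n₂) ℝ) :
    Matrix (Fin n₁ ⊕ Fin n₂) (Fin n₁ ⊕ Fin n₂) ℝ :=
  A - Bu A * Cu n₁ n₂

/-- The lifted reset output matrix `C̃_r` with block rows
`C, C A_r, C A A_r, …, C A^{T-2} A_r`. -/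
noncomputable def Crtil {n₁ n₂ q : ℕ} (T : ℕ)
    (A : Matrix (Fin n₁ ⊕ Fin n₂) (Fin n₁ ⊕ Fin n₂) ℝ)
    (C : Matrix (Fin q) (Fin n₁ ⊕ Fin n₂) ℝ) :
    Matrix (Fin T × Fin q) (Fin n₁ ⊕ Fin n₂) ℝ :=
  Matrix.of fun p j =>
    (if (p.1 : ℕ) = 0 then C else C * A ^ ((p.1 : ℕ) - 1) * Ar A) p.2 j

/-- Trajectories of the resetting closed loop: the controller state is reset to zero
every `T` steps. -/
def ResetTraj {n₁ n₂ m q : ℕ} (T : ℕ)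
    (A : Matrix (Fin n₁ ⊕ Fin n₂) (Fin n₁ ⊕ Fin n₂) ℝ)
    (B : Matrix (Fin n₁ ⊕ Fin n₂) (Fin m) ℝ)
    (C : Matrix (Fin q) (Fin n₁ ⊕ Fin n₂) ℝ) (D : Matrix (Fin q) (Fin m) ℝ)
    (ξ : ℕ → (Fin n₁ ⊕ Fin n₂) → ℝ) (w : ℕ → Fin m → ℝ) (z : ℕ → Fin q → ℝ) : Prop :=
  ∀ t : ℕ,
    ξ (t + 1) = (if T ∣ t then Ar A else A).mulVec (ξ t) + B.mulVec (w t) ∧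
    z t = C.mulVec (ξ t) + D.mulVec (w t)

/-- The (periodically time-varying) resetting closed loop satisfies quadratic
performance specified by `P`. -/
def ResetQuadPerf {n₁ n₂ m q : ℕ} (T : ℕ)
    (A : Matrix (Fin n₁ ⊕ Fin n₂) (Fin n₁ ⊕ Fin n₂) ℝ)
    (B : Matrix (Fin n₁ ⊕ Fin n₂) (Fin m) ℝ)
    (C : Matrix (Fin q) (Fin n₁ ⊕ Fin n₂) ℝ) (D : Matrix (Fin q) (Fin m) ℝ)
    (P : Matrix (Fin m ⊕ Fin q) (Fin m ⊕ Fin q) ℝ) : Prop :=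
  (∀ ξ : ℕ → (Fin n₁ ⊕ Fin n₂) → ℝ,
      (∀ t : ℕ, ξ (t + 1) = (if T ∣ t then Ar A else A).mulVec (ξ t)) →
      Tendsto ξ atTop (𝓝 0)) ∧
  ∃ ε > (0 : ℝ), ∀ ξ w z, ResetTraj T A B C D ξ w z → ξ 0 = 0 →
    Summable (fun t => w t ⬝ᵥ w t) →
    ∃ l : ℝ,
      Tendsto (fun N => ∑ t ∈ Finset.range N,
        Sum.elim (w t) (z t) ⬝ᵥ P.mulVec (Sum.elim (w t) (z t))) atTop (𝓝 l) ∧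
      l ≤ -ε * ∑' t, w t ⬝ᵥ w t

section Helpers

variable {n₁ n₂ m q : ℕ}

lemma mulVec_sum {α β : Type*} [Fintype β] [Fintype α] (M : Matrix α β ℝ) (s : Finset ℕ)
    (v : ℕ → β → ℝ) : M.mulVec (∑ i ∈ s, v i) = ∑ i ∈ s, M.mulVec (v i) := by
  exact Matrix.mulVec_sum M s v

/-- State within a reset block. -/
lemma reset_state (T : ℕ) (hT : 1 ≤ T)
    (A : Matrix (Fin n₁ ⊕ Fin n₂) (Fin n₁ ⊕ Fin n₂) ℝ)
    (B : Matrix (Fin n₁ ⊕ Fin n₂) (Fin m) ℝ)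
    (ξ : ℕ → (Fin n₁ ⊕ Fin n₂) → ℝ) (w : ℕ → Fin m → ℝ)
    (hξ : ∀ t : ℕ, ξ (t + 1) = (if T ∣ t then Ar A else A).mulVec (ξ t) + B.mulVec (w t)) :
    ∀ k j : ℕ, 1 ≤ j → j ≤ T →
      ξ (k * T + j) = (A ^ (j - 1) * Ar A).mulVec (ξ (k * T)) +
        ∑ i ∈ Finset.range j, (A ^ (j - 1 - i) * B).mulVec (w (k * T + i)) := by
  intro k j hj1 hjT
  induction j with
  | zero => omega
  | succ j ih =>
    rcases Nat.eq_or_lt_of_le hj1 with h1 | h1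
    · -- j + 1 = 1, so j = 0
      have hj0 : j = 0 := by omega
      subst hj0
      have hdvd : T ∣ k * T := dvd_mul_left T k
      simp [hξ (k * T), hdvd, Matrix.one_mulVec, Finset.sum_range_one]
    · have hj1' : 1 ≤ j := by omega
      have hjT' : j ≤ T := by omega
      have hndvd : ¬ T ∣ (k * T + j) := by
        intro h
        have : T ∣ j := (Nat.dvd_add_right (dvd_mul_left T k)).mp h
        have := Nat.le_of_dvd (by omega) this
        omega
      have step := hξ (k * T + j)
      rw [show k * T + j + 1 = k * T + (j + 1) by ring] at step
      rw [step, if_neg hndvd, ih hj1' hjT']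
      rw [Matrix.mulVec_add, Matrix.mulVec_mulVec, _root_.mulVec_sum]
      rw [Finset.sum_range_succ]
      have e1 : A * (A ^ (j - 1) * Ar A) = A ^ (j + 1 - 1) * Ar A := by
        rw [← mul_assoc, ← pow_succ']
        congr 2
        omega
      have e2 : ∀ i ∈ Finset.range j,
          A.mulVec ((A ^ (j - 1 - i) * B).mulVec (w (k * T + i)))
            = (A ^ (j + 1 - 1 - i) * B).mulVec (w (k * T + i)) := by
        intro i hi
        simp only [Finset.mem_range] at hi
        rw [Matrix.mulVec_mulVec]
        have : A * (A ^ (j - 1 - i) * B) = A ^ (j + 1 - 1 - i) * B := by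
          rw [← Matrix.mul_assoc, ← pow_succ']
          congr 2
          omega
        rw [this]
      rw [Finset.sum_congr rfl e2, e1]
      rw [show j + 1 - 1 - j = 0 by omega, pow_zero, Matrix.one_mul, add_assoc]

/-- `Btil` applied to the lifted input vector. -/
lemma Btil_mulVec (T : ℕ)
    (A : Matrix (Fin n₁ ⊕ Fin n₂) (Fin n₁ ⊕ Fin n₂) ℝ)
    (B : Matrix (Fin n₁ ⊕ Fin n₂) (Fin m) ℝ) (w : ℕ → Fin m → ℝ) (s : ℕ) :
    (Btil T A B).mulVec (fun p => w (s + (p.1 : ℕ)) p.2) =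
      ∑ i ∈ Finset.range T, (A ^ (T - 1 - i) * B).mulVec (w (s + i)) := by
  funext j
  simp only [Matrix.mulVec, dotProduct, Btil, Matrix.of_apply,
    Fintype.sum_prod_type, Finset.sum_apply]
  exact Fin.sum_univ_eq_sum_range
    (fun i => ∑ b : Fin m, (A ^ (T - 1 - i) * B) j b * w (s + i) b) T

/-- state at block boundaries. -/
lemma reset_state_mul (T : ℕ) (hT : 1 ≤ T)
    (A : Matrix (Fin n₁ ⊕ Fin n₂) (Fin n₁ ⊕ Fin n₂) ℝ)
    (B : Matrix (Fin n₁ ⊕ Fin n₂) (Fin m) ℝ)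
    (ξ : ℕ → (Fin n₁ ⊕ Fin n₂) → ℝ) (w : ℕ → Fin m → ℝ)
    (hξ : ∀ t : ℕ, ξ (t + 1) = (if T ∣ t then Ar A else A).mulVec (ξ t) + B.mulVec (w t)) (k : ℕ) :
    ξ ((k + 1) * T) = (A ^ (T - 1) * Ar A).mulVec (ξ (k * T)) +
      (Btil T A B).mulVec (fun p => w (k * T + (p.1 : ℕ)) p.2) := by
  rw [Btil_mulVec, show (k+1) * T = k * T + T by ring,
    reset_state T hT A B ξ w hξ k T hT le_rfl]

/-- `Dtil` applied to the lifted input vector, componentwise. -/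
lemma Dtil_mulVec (T : ℕ)
    (A : Matrix (Fin n₁ ⊕ Fin n₂) (Fin n₁ ⊕ Fin n₂) ℝ)
    (B : Matrix (Fin n₁ ⊕ Fin n₂) (Fin m) ℝ)
    (C : Matrix (Fin q) (Fin n₁ ⊕ Fin n₂) ℝ) (D : Matrix (Fin q) (Fin m) ℝ)
    (w : ℕ → Fin m → ℝ) (s : ℕ) (p : Fin T × Fin q) :
    (Dtil T A B C D).mulVec (fun r => w (s + (r.1 : ℕ)) r.2) p =
      (∑ i ∈ Finset.range (p.1 : ℕ), (C * A ^ ((p.1 : ℕ) - i - 1) * B).mulVec (w (s + i)) p.2)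
        + D.mulVec (w (s + (p.1 : ℕ))) p.2 := by
  obtain ⟨j, b⟩ := p
  set g : ℕ → ℝ := fun i =>
    if (j : ℕ) = i then D.mulVec (w (s + i)) b
    else if i < (j : ℕ) then (C * A ^ ((j : ℕ) - i - 1) * B).mulVec (w (s + i)) b
    else 0 with hg
  have h1 : (Dtil T A B C D).mulVec (fun r => w (s + (r.1 : ℕ)) r.2) (j, b)
      = ∑ i ∈ Finset.range T, g i := by
    rw [← Fin.sum_univ_eq_sum_range g T]
    simp only [Matrix.mulVec, dotProduct, Dtil, Matrix.of_apply, Fintype.sum_prod_type]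
    refine Finset.sum_congr rfl fun i _ => ?_
    simp only [hg]
    split_ifs with hc1 hc2
    · simp [Matrix.mulVec, dotProduct]
    · simp [Matrix.mulVec, dotProduct]
    · simp
  rw [h1]
  have h2 : ∑ i ∈ Finset.range T, g i = ∑ i ∈ Finset.range ((j : ℕ) + 1), g i := by
    refine (Finset.sum_subset ?_ ?_).symm
    · exact Finset.range_subset_range.mpr (by omega)
    · intro i _ hi
      simp only [Finset.mem_range, not_lt] at hi
      simp only [hg]
      rw [if_neg (by omega), if_neg (by omega)]
  rw [h2, Finset.sum_range_succ]
  congr 1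
  · refine Finset.sum_congr rfl fun i hi => ?_
    simp only [Finset.mem_range] at hi
    simp only [hg]
    rw [if_neg (by omega), if_pos hi]
  · simp [hg]

/-- `Crtil` applied to the state, componentwise. -/
lemma Crtil_mulVec (T : ℕ)
    (A : Matrix (Fin n₁ ⊕ Fin n₂) (Fin n₁ ⊕ Fin n₂) ℝ)
    (C : Matrix (Fin q) (Fin n₁ ⊕ Fin n₂) ℝ) (v : (Fin n₁ ⊕ Fin n₂) → ℝ) (p : Fin T × Fin q) :
    (Crtil T A C).mulVec v p =
      (if (p.1 : ℕ) = 0 then C else C * A ^ ((p.1 : ℕ) - 1) * Ar A).mulVec v p.2 := by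
  obtain ⟨j, b⟩ := p
  by_cases h : (j : ℕ) = 0 <;>
    simp [Matrix.mulVec, dotProduct, Crtil, h]

/-- The reset output over a block equals the lifted output. -/
lemma reset_output (T : ℕ) (hT : 1 ≤ T)
    (A : Matrix (Fin n₁ ⊕ Fin n₂) (Fin n₁ ⊕ Fin n₂) ℝ)
    (B : Matrix (Fin n₁ ⊕ Fin n₂) (Fin m) ℝ)
    (C : Matrix (Fin q) (Fin n₁ ⊕ Fin n₂) ℝ) (D : Matrix (Fin q) (Fin m) ℝ)
    (ξ : ℕ → (Fin n₁ ⊕ Fin n₂) → ℝ) (w : ℕ → Fin m → ℝ) (z : ℕ → Fin q → ℝ)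
    (hξ : ∀ t : ℕ, ξ (t + 1) = (if T ∣ t then Ar A else A).mulVec (ξ t) + B.mulVec (w t))
    (hz : ∀ t : ℕ, z t = C.mulVec (ξ t) + D.mulVec (w t)) (k : ℕ) (p : Fin T × Fin q) :
    z (k * T + (p.1 : ℕ)) p.2 =
      (Crtil T A C).mulVec (ξ (k * T)) p +
        (Dtil T A B C D).mulVec (fun r => w (k * T + (r.1 : ℕ)) r.2) p := by
  rw [Crtil_mulVec, Dtil_mulVec]
  obtain ⟨j, b⟩ := p
  simp only
  rcases Nat.eq_zero_or_pos (j : ℕ) with hj0 | hjpos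
  · rw [hj0]
    simp [hz (k * T), Pi.add_apply]
  · rw [if_neg (by omega)]
    have key : z (k * T + (j : ℕ)) =
        (C * A ^ ((j : ℕ) - 1) * Ar A).mulVec (ξ (k * T)) +
          (∑ i ∈ Finset.range (j : ℕ), (C * A ^ ((j : ℕ) - i - 1) * B).mulVec (w (k * T + i))
            + D.mulVec (w (k * T + (j : ℕ)))) := by
      rw [hz (k * T + (j : ℕ)),
        reset_state T hT A B ξ w hξ k (j : ℕ) hjpos (le_of_lt j.isLt),
        Matrix.mulVec_add, _root_.mulVec_sum]
      rw [Matrix.mulVec_mulVec, ← Matrix.mul_assoc]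
      rw [add_assoc]
      congr 1
      congr 1
      refine Finset.sum_congr rfl fun i hi => ?_
      simp only [Finset.mem_range] at hi
      rw [Matrix.mulVec_mulVec, Matrix.mul_assoc,
        show (j : ℕ) - 1 - i = (j : ℕ) - i - 1 from by omega]
    rw [key]
    simp [Pi.add_apply, Finset.sum_apply]

open Kronecker in
lemma kron_dot {T a b : ℕ} (M : Matrix (Fin a) (Fin b) ℝ)
    (v : Fin T × Fin a → ℝ) (u : Fin T × Fin b → ℝ) :
    v ⬝ᵥ ((1 : Matrix (Fin T) (Fin T) ℝ) ⊗ₖ M).mulVec u =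
      ∑ j : Fin T, (fun x => v (j, x)) ⬝ᵥ M.mulVec (fun y => u (j, y)) := by
  simp only [dotProduct, Matrix.mulVec, Fintype.sum_prod_type,
    Matrix.kroneckerMap_apply, Matrix.one_apply, ite_mul, one_mul, zero_mul]
  refine Finset.sum_congr rfl fun j _ => ?_
  refine Finset.sum_congr rfl fun x _ => ?_
  congr 1
  rw [Finset.sum_comm]
  simp [Finset.sum_ite_eq, Finset.mul_sum]

lemma Ptil_quadform {T : ℕ} (Q : Matrix (Fin m) (Fin m) ℝ) (S : Matrix (Fin m) (Fin q) ℝ)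
    (R : Matrix (Fin q) (Fin q) ℝ) (u : Fin T × Fin m → ℝ) (z : Fin T × Fin q → ℝ) :
    Sum.elim u z ⬝ᵥ (Ptil T Q S R).mulVec (Sum.elim u z) =
      ∑ j : Fin T, Sum.elim (fun x => u (j, x)) (fun y => z (j, y)) ⬝ᵥ
        (Matrix.fromBlocks Q S Sᵀ R).mulVec (Sum.elim (fun x => u (j, x)) (fun y => z (j, y))) := by
  have expand : ∀ (j : Fin T), Sum.elim (fun x => u (j, x)) (fun y => z (j, y)) ⬝ᵥ
        (Matrix.fromBlocks Q S Sᵀ R).mulVec (Sum.elim (fun x => u (j, x)) (fun y => z (j, y)))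
      = (fun x => u (j, x)) ⬝ᵥ Q.mulVec (fun x => u (j, x))
        + (fun x => u (j, x)) ⬝ᵥ S.mulVec (fun y => z (j, y))
        + ((fun y => z (j, y)) ⬝ᵥ Sᵀ.mulVec (fun x => u (j, x))
        + (fun y => z (j, y)) ⬝ᵥ R.mulVec (fun y => z (j, y))) := by
    intro j
    rw [Matrix.fromBlocks_mulVec, sumElim_dotProduct_sumElim]
    simp [dotProduct_add, Sum.elim_comp_inl, Sum.elim_comp_inr]
  rw [Finset.sum_congr rfl fun j _ => expand j]
  rw [Ptil, Matrix.fromBlocks_mulVec, sumElim_dotProduct_sumElim]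
  simp only [Sum.elim_comp_inl, Sum.elim_comp_inr, dotProduct_add]
  rw [kron_dot, kron_dot, kron_dot, kron_dot]
  rw [← Finset.sum_add_distrib, ← Finset.sum_add_distrib, ← Finset.sum_add_distrib]

lemma sum_grouped (T : ℕ) (f : ℕ → ℝ) (K : ℕ) :
    ∑ k ∈ Finset.range K, ∑ j ∈ Finset.range T, f (k * T + j) =
      ∑ t ∈ Finset.range (K * T), f t := by
  induction K with
  | zero => simp
  | succ K ih =>
    rw [Finset.sum_range_succ, ih, show (K + 1) * T = K * T + T by ring,
      Finset.sum_range_add]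

lemma tendsto_mul_atTop (T : ℕ) (hT : 1 ≤ T) :
    Filter.Tendsto (fun k : ℕ => k * T) Filter.atTop Filter.atTop :=
  Filter.tendsto_atTop_mono (fun k => Nat.le_mul_of_pos_right k hT)
    Filter.tendsto_id

lemma summable_grouped (T : ℕ) (hT : 1 ≤ T) (f : ℕ → ℝ) (hf : ∀ t, 0 ≤ f t) :
    (Summable f ↔ Summable (fun k => ∑ j ∈ Finset.range T, f (k * T + j))) ∧
    (Summable f → ∑' k, (∑ j ∈ Finset.range T, f (k * T + j)) = ∑' t, f t) := by
  set g : ℕ → ℝ := fun k => ∑ j ∈ Finset.range T, f (k * T + j) with hg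
  have hgnn : ∀ k, 0 ≤ g k := fun k => Finset.sum_nonneg fun j _ => hf _
  have hpart : ∀ K, ∑ k ∈ Finset.range K, g k = ∑ t ∈ Finset.range (K * T), f t :=
    fun K => sum_grouped T f K
  constructor
  · constructor
    · intro hsf
      refine summable_of_sum_range_le (c := ∑' t, f t) hgnn fun K => ?_
      rw [hpart]
      exact hsf.sum_le_tsum _ (fun t _ => hf t)
    · intro hsg
      refine summable_of_sum_range_le (c := ∑' k, g k) hf fun N => ?_
      have h1 : ∑ t ∈ Finset.range N, f t ≤ ∑ t ∈ Finset.range (N * T), f t := by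
        refine Finset.sum_le_sum_of_subset_of_nonneg ?_ fun t _ _ => hf t
        exact Finset.range_subset_range.mpr (Nat.le_mul_of_pos_right N hT)
      rw [← hpart] at h1
      exact h1.trans (hsg.sum_le_tsum _ (fun k _ => hgnn k))
  · intro hsf
    have hsg : Summable g := by
      refine summable_of_sum_range_le (c := ∑' t, f t) hgnn fun K => ?_
      rw [hpart]
      exact hsf.sum_le_tsum _ (fun t _ => hf t)
    have t1 : Filter.Tendsto (fun K => ∑ k ∈ Finset.range K, g k) Filter.atTop (𝓝 (∑' k, g k)) :=
      hsg.hasSum.tendsto_sum_nat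
    have t2 : Filter.Tendsto (fun K => ∑ t ∈ Finset.range (K * T), f t) Filter.atTop
        (𝓝 (∑' t, f t)) :=
      hsf.hasSum.tendsto_sum_nat.comp (tendsto_mul_atTop T hT)
    have : Filter.Tendsto (fun K => ∑ k ∈ Finset.range K, g k) Filter.atTop (𝓝 (∑' t, f t)) := by
      simpa only [hpart] using t2
    exact tendsto_nhds_unique t1 this

/-- Convergence along all residue classes mod `T` implies convergence. -/
lemma tendsto_of_residues {E : Type*} [TopologicalSpace E] (T : ℕ) (hT : 1 ≤ T)
    (x : ℕ → E) (a : E)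
    (h : ∀ j < T, Filter.Tendsto (fun k => x (k * T + j)) Filter.atTop (𝓝 a)) :
    Filter.Tendsto x Filter.atTop (𝓝 a) := by
  rw [Filter.tendsto_def]
  intro s hs
  rw [Filter.mem_atTop_sets]
  have hK : ∀ j : Fin T, ∃ K, ∀ k ≥ K, x (k * T + (j : ℕ)) ∈ s := by
    intro j
    have hev : ∀ᶠ k in Filter.atTop, x (k * T + (j : ℕ)) ∈ s :=
      (h (j : ℕ) j.isLt).eventually_mem hs
    exact Filter.eventually_atTop.mp hev
  choose K hKspec using hK
  by_cases hT0 : T = 0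
  · omega
  refine ⟨(Finset.univ.sup K + 1) * T, fun t ht => ?_⟩
  have hTpos : 0 < T := by omega
  have ht' : t = (t / T) * T + t % T := by
    rw [Nat.div_add_mod' t T]
  have hmod : t % T < T := Nat.mod_lt _ hTpos
  have hdiv : Finset.univ.sup K + 1 ≤ t / T := by
    rw [Nat.le_div_iff_mul_le hTpos]
    exact ht
  have hj := hKspec ⟨t % T, hmod⟩ (t / T)
    (le_trans (le_trans (Finset.le_sup (Finset.mem_univ _)) (Nat.le_succ _)) hdiv)
  have hxeq : x t = x ((t / T) * T + t % T) := by rw [← ht']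
  show x t ∈ s
  rw [hxeq]
  exact hj

/-- A nonnegative sequence with `a (n+1) ≤ a n / 2 + e n`, `e → 0`, tends to `0`. -/
lemma half_decay (a e : ℕ → ℝ) (ha : ∀ n, 0 ≤ a n)
    (h : ∀ n, a (n + 1) ≤ a n / 2 + e n)
    (he : Filter.Tendsto e Filter.atTop (𝓝 0)) :
    Filter.Tendsto a Filter.atTop (𝓝 0) := by
  rw [Metric.tendsto_atTop]
  intro ε hε
  have he' : ∀ᶠ n in Filter.atTop, e n < ε / 4 := by
    have := Metric.tendsto_atTop.mp he (ε / 4) (by linarith)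
    obtain ⟨N, hN⟩ := this
    refine Filter.eventually_atTop.mpr ⟨N, fun n hn => ?_⟩
    have := hN n hn
    rw [Real.dist_eq, sub_zero] at this
    exact (le_abs_self _).trans_lt this
  obtain ⟨N, hN⟩ := Filter.eventually_atTop.mp he'
  have key : ∀ j, a (N + j) ≤ a N / 2 ^ j + ε / 2 := by
    intro j
    induction j with
    | zero => simp; linarith [ha N, hε]
    | succ j ih =>
      have h1 := h (N + j)
      have h2 := hN (N + j) (Nat.le_add_right _ _)
      have : a (N + (j + 1)) = a (N + j + 1) := by ring_nf
      rw [this]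
      calc a (N + j + 1) ≤ a (N + j) / 2 + e (N + j) := h1
        _ ≤ (a N / 2 ^ j + ε / 2) / 2 + ε / 4 := by linarith
        _ = a N / 2 ^ (j + 1) + ε / 2 := by ring
  obtain ⟨j0, hj0⟩ := pow_unbounded_of_one_lt (a N * 2 / ε) (by norm_num : (1:ℝ) < 2)
  refine ⟨N + j0, fun n hn => ?_⟩
  obtain ⟨j, rfl⟩ := Nat.exists_eq_add_of_le hn
  rw [Real.dist_eq, sub_zero, abs_of_nonneg (ha _)]
  have h2 : a N / 2 ^ (j0 + j) < ε / 2 := by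
    have hle : (2:ℝ) ^ j0 ≤ 2 ^ (j0 + j) := by
      apply pow_le_pow_right₀ (by norm_num) (by omega)
    have hlt : a N * 2 / ε < 2 ^ (j0 + j) := hj0.trans_le hle
    have hpow : (0:ℝ) < 2 ^ (j0 + j) := by positivity
    rw [div_lt_iff₀ hε] at hlt
    rw [div_lt_iff₀ hpow]
    nlinarith
  have := key (j0 + j)
  rw [← Nat.add_assoc] at this
  linarith

/-- `w → 0` from summability of `w ⬝ᵥ w`. -/
lemma input_tendsto_zero {m : ℕ} (w : ℕ → Fin m → ℝ)
    (hsum : Summable (fun t => w t ⬝ᵥ w t)) :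
    Filter.Tendsto w Filter.atTop (𝓝 0) := by
  have hterm : Filter.Tendsto (fun t => w t ⬝ᵥ w t) Filter.atTop (𝓝 0) :=
    hsum.tendsto_atTop_zero
  rw [tendsto_pi_nhds]
  intro a
  have hsq : Filter.Tendsto (fun t => (w t a) ^ 2) Filter.atTop (𝓝 0) := by
    refine tendsto_of_tendsto_of_tendsto_of_le_of_le tendsto_const_nhds hterm
      (fun t => by positivity) (fun t => ?_)
    have h0 := Finset.single_le_sum (f := fun b => w t b * w t b)
      (fun b _ => mul_self_nonneg _) (Finset.mem_univ a)
    have h1 : w t a * w t a ≤ ∑ x : Fin m, w t x * w t x := by simpa using h0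
    show (w t a) ^ 2 ≤ w t ⬝ᵥ w t
    rw [dotProduct]
    nlinarith [h1]
  have habs : Filter.Tendsto (fun t => |w t a|) Filter.atTop (𝓝 0) := by
    have := (Real.continuous_sqrt.tendsto 0).comp hsq
    simpa [Function.comp_def, Real.sqrt_sq_eq_abs] using this
  have h0 : Filter.Tendsto (fun t => w t a) Filter.atTop (𝓝 0) :=
    (tendsto_zero_iff_abs_tendsto_zero _).mpr habs
  simpa using h0


/-- Pointwise power decay implies operator-norm decay, and then driven-state decay. -/
lemma state_tendsto_zero {St Im : Type*} [Fintype St] [Fintype Im] [DecidableEq St]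
    (A : Matrix St St ℝ) (B : Matrix St Im ℝ)
    (hstab : ∀ v : St → ℝ, Filter.Tendsto (fun k => (A ^ k).mulVec v) Filter.atTop (𝓝 0))
    (w : ℕ → Im → ℝ) (hw : Filter.Tendsto w Filter.atTop (𝓝 0))
    (x : ℕ → St → ℝ)
    (hx : ∀ k, x (k + 1) = A.mulVec (x k) + B.mulVec (w k)) :
    Filter.Tendsto x Filter.atTop (𝓝 0) := by
  classical
  -- continuous linear maps for powers of A
  set F : ℕ → ((St → ℝ) →L[ℝ] (St → ℝ)) :=
    fun k => LinearMap.toContinuousLinearMap ((A ^ k).mulVecLin) with hF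
  have hFapp : ∀ k v, F k v = (A ^ k).mulVec v := fun k v => rfl
  set c : ℕ → ℝ := fun k => ‖F k‖ with hc
  have hc0 : ∀ k, 0 ≤ c k := fun k => norm_nonneg _
  have hcbound : ∀ k v, ‖(A ^ k).mulVec v‖ ≤ c k * ‖v‖ := by
    intro k v
    rw [← hFapp]
    exact (F k).le_opNorm v
  -- c tends to 0
  have hctends : Filter.Tendsto c Filter.atTop (𝓝 0) := by
    have hbound : ∀ k, c k ≤ ∑ i : St, ‖(A ^ k).mulVec (Pi.single i 1)‖ := by
      intro k
      refine ContinuousLinearMap.opNorm_le_bound _ (Finset.sum_nonneg fun i _ => norm_nonneg _)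
        fun v => ?_
      have hv : v = ∑ i : St, v i • (Pi.single i 1 : St → ℝ) := by
        funext j
        simp [Finset.sum_apply, Pi.single_apply, Finset.sum_ite_eq']
      calc ‖F k v‖ = ‖∑ i : St, v i • F k ((Pi.single i 1 : St → ℝ))‖ := by
            rw [show F k v = ∑ i : St, v i • F k ((Pi.single i 1 : St → ℝ)) from by
              conv_lhs => rw [hv]
              rw [map_sum]
              exact Finset.sum_congr rfl fun i _ => by rw [_root_.map_smul]]
        _ ≤ ∑ i : St, ‖v i • F k ((Pi.single i 1 : St → ℝ))‖ := norm_sum_le _ _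
        _ ≤ ∑ i : St, ‖(A ^ k).mulVec (Pi.single i 1)‖ * ‖v‖ := by
            refine Finset.sum_le_sum fun i _ => ?_
            rw [norm_smul, hFapp]
            rw [mul_comm]
            exact mul_le_mul_of_nonneg_left (norm_le_pi_norm v i) (norm_nonneg _)
        _ = (∑ i : St, ‖(A ^ k).mulVec (Pi.single i 1)‖) * ‖v‖ := by
            rw [Finset.sum_mul]
    have hsum0 : Filter.Tendsto
        (fun k => ∑ i : St, ‖(A ^ k).mulVec (Pi.single i 1)‖) Filter.atTop (𝓝 0) := by
      have : ∀ i : St, Filter.Tendsto (fun k => ‖(A ^ k).mulVec (Pi.single i 1)‖)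
          Filter.atTop (𝓝 0) := fun i =>
        (tendsto_zero_iff_norm_tendsto_zero).mp (hstab (Pi.single i 1))
      have := tendsto_finset_sum Finset.univ (fun i _ => this i)
      simpa using this
    exact tendsto_of_tendsto_of_tendsto_of_le_of_le tendsto_const_nhds hsum0 hc0 hbound
  -- global bound on c
  obtain ⟨Nb, hNb⟩ := Filter.eventually_atTop.mp
    (hctends.eventually_le_const (by norm_num : (0:ℝ) < 1))
  set Cb : ℝ := 1 + ∑ i ∈ Finset.range Nb, c i with hCb
  have hCb1 : (1:ℝ) ≤ Cb := by
    have : 0 ≤ ∑ i ∈ Finset.range Nb, c i := Finset.sum_nonneg fun i _ => hc0 i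
    simp [hCb]; linarith
  have hcCb : ∀ k, c k ≤ Cb := by
    intro k
    by_cases hk : k < Nb
    · have : c k ≤ ∑ i ∈ Finset.range Nb, c i :=
        Finset.single_le_sum (fun i _ => hc0 i) (Finset.mem_range.mpr hk)
      simp [hCb]; linarith
    · have := hNb k (by omega)
      linarith
  -- pick K ≥ 1 with c K ≤ 1/2
  obtain ⟨k0, hk0⟩ := Filter.eventually_atTop.mp
    (hctends.eventually_le_const (by norm_num : (0:ℝ) < 1/2))
  set K : ℕ := k0 + 1 with hK
  have hK1 : 1 ≤ K := by omega
  have hcK : c K ≤ 1/2 := hk0 K (by omega)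
  -- explicit solution over s steps
  have hexp : ∀ k s : ℕ, x (k + s) = (A ^ s).mulVec (x k) +
      ∑ j ∈ Finset.range s, (A ^ (s - 1 - j)).mulVec (B.mulVec (w (k + j))) := by
    intro k s
    induction s with
    | zero => simp [Matrix.one_mulVec]
    | succ s ih =>
      calc x (k + (s + 1)) = A.mulVec (x (k + s)) + B.mulVec (w (k + s)) := hx (k + s)
        _ = A.mulVec ((A ^ s).mulVec (x k) +
              ∑ j ∈ Finset.range s, (A ^ (s - 1 - j)).mulVec (B.mulVec (w (k + j))))
              + B.mulVec (w (k + s)) := by rw [ih]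
        _ = (A ^ (s + 1)).mulVec (x k) +
              (∑ j ∈ Finset.range s, (A ^ (s + 1 - 1 - j)).mulVec (B.mulVec (w (k + j)))
                + (A ^ (s + 1 - 1 - s)).mulVec (B.mulVec (w (k + s)))) := by
            rw [Matrix.mulVec_add, Matrix.mulVec_mulVec, ← pow_succ', _root_.mulVec_sum]
            rw [show s + 1 - 1 - s = 0 by omega, pow_zero, Matrix.one_mulVec, add_assoc]
            congr 1
            congr 1
            refine Finset.sum_congr rfl fun j hj => ?_
            simp only [Finset.mem_range] at hj
            rw [Matrix.mulVec_mulVec, ← pow_succ',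
              show s - 1 - j + 1 = s + 1 - 1 - j by omega]
        _ = (A ^ (s + 1)).mulVec (x k) +
              ∑ j ∈ Finset.range (s + 1), (A ^ (s + 1 - 1 - j)).mulVec (B.mulVec (w (k + j))) := by
            rw [Finset.sum_range_succ]
  -- input norm tends to zero
  set d : ℕ → ℝ := fun t => ‖B.mulVec (w t)‖ with hd
  have hd0 : Filter.Tendsto d Filter.atTop (𝓝 0) := by
    have hcont : Continuous (fun v : Im → ℝ => B.mulVec v) :=
      (B.mulVecLin).continuous_of_finiteDimensional
    have : Filter.Tendsto (fun t => B.mulVec (w t)) Filter.atTop (𝓝 (B.mulVec 0)) :=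
      (hcont.tendsto 0).comp hw
    rw [Matrix.mulVec_zero] at this
    exact tendsto_zero_iff_norm_tendsto_zero.mp this
  set e : ℕ → ℝ := fun k => Cb * ∑ j ∈ Finset.range K, d (k + j) with he
  have he0 : Filter.Tendsto e Filter.atTop (𝓝 0) := by
    have hsum : Filter.Tendsto (fun k => ∑ j ∈ Finset.range K, d (k + j))
        Filter.atTop (𝓝 0) := by
      have : ∀ j ∈ Finset.range K, Filter.Tendsto (fun k => d (k + j)) Filter.atTop (𝓝 0) :=
        fun j _ => hd0.comp (Filter.tendsto_atTop_mono (fun k => Nat.le_add_right k j)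
          Filter.tendsto_id)
      have := tendsto_finset_sum (Finset.range K) this
      simpa using this
    have := hsum.const_mul Cb
    simpa using this
  -- one-block decay estimate
  have hblock : ∀ k, ‖x (k + K)‖ ≤ ‖x k‖ / 2 + e k := by
    intro k
    rw [hexp k K]
    calc ‖(A ^ K).mulVec (x k) +
          ∑ j ∈ Finset.range K, (A ^ (K - 1 - j)).mulVec (B.mulVec (w (k + j)))‖
        ≤ ‖(A ^ K).mulVec (x k)‖ +
          ‖∑ j ∈ Finset.range K, (A ^ (K - 1 - j)).mulVec (B.mulVec (w (k + j)))‖ :=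
          norm_add_le _ _
      _ ≤ c K * ‖x k‖ + ∑ j ∈ Finset.range K, ‖(A ^ (K - 1 - j)).mulVec (B.mulVec (w (k + j)))‖ :=
          add_le_add (hcbound K _) (norm_sum_le _ _)
      _ ≤ (1/2) * ‖x k‖ + ∑ j ∈ Finset.range K, Cb * d (k + j) := by
          refine add_le_add (mul_le_mul_of_nonneg_right hcK (norm_nonneg _)) ?_
          refine Finset.sum_le_sum fun j _ => ?_
          calc ‖(A ^ (K - 1 - j)).mulVec (B.mulVec (w (k + j)))‖
              ≤ c (K - 1 - j) * d (k + j) := hcbound _ _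
            _ ≤ Cb * d (k + j) :=
                mul_le_mul_of_nonneg_right (hcCb _) (norm_nonneg _)
      _ = ‖x k‖ / 2 + e k := by rw [← Finset.mul_sum]; ring
  -- conclude per residue class
  refine tendsto_of_residues K hK1 x 0 fun r hr => ?_
  have haux : Filter.Tendsto (fun n => ‖x (n * K + r)‖) Filter.atTop (𝓝 0) := by
    refine half_decay (fun n => ‖x (n * K + r)‖) (fun n => e (n * K + r))
      (fun n => norm_nonneg _) (fun n => ?_) ?_
    · have := hblock (n * K + r)
      calc ‖x ((n + 1) * K + r)‖ = ‖x ((n * K + r) + K)‖ := by ring_nf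
        _ ≤ ‖x (n * K + r)‖ / 2 + e (n * K + r) := this
    · exact he0.comp (Filter.tendsto_atTop_mono
        (fun n => le_trans (Nat.le_mul_of_pos_right n hK1) (Nat.le_add_right _ _))
        Filter.tendsto_id)
  exact tendsto_zero_iff_norm_tendsto_zero.mpr haux

lemma dot_group {m : ℕ} (T : ℕ) (w : ℕ → Fin m → ℝ) (s : ℕ) :
    (fun p : Fin T × Fin m => w (s + (p.1 : ℕ)) p.2) ⬝ᵥ
      (fun p : Fin T × Fin m => w (s + (p.1 : ℕ)) p.2) =
    ∑ j ∈ Finset.range T, w (s + j) ⬝ᵥ w (s + j) := by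
  simp only [dotProduct, Fintype.sum_prod_type]
  exact Fin.sum_univ_eq_sum_range (fun j => ∑ a : Fin m, w (s + j) a * w (s + j) a) T

lemma Ptil_term {m q : ℕ} (T : ℕ) (Q : Matrix (Fin m) (Fin m) ℝ) (S : Matrix (Fin m) (Fin q) ℝ)
    (R : Matrix (Fin q) (Fin q) ℝ) (w : ℕ → Fin m → ℝ) (z : ℕ → Fin q → ℝ) (s : ℕ) :
    Sum.elim (fun p : Fin T × Fin m => w (s + (p.1 : ℕ)) p.2)
        (fun p : Fin T × Fin q => z (s + (p.1 : ℕ)) p.2) ⬝ᵥ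
      (Ptil T Q S R).mulVec (Sum.elim (fun p : Fin T × Fin m => w (s + (p.1 : ℕ)) p.2)
        (fun p : Fin T × Fin q => z (s + (p.1 : ℕ)) p.2)) =
    ∑ j ∈ Finset.range T, Sum.elim (w (s + j)) (z (s + j)) ⬝ᵥ
      (Matrix.fromBlocks Q S Sᵀ R).mulVec (Sum.elim (w (s + j)) (z (s + j))) := by
  rw [Ptil_quadform]
  exact Fin.sum_univ_eq_sum_range (fun j => Sum.elim (w (s + j)) (z (s + j)) ⬝ᵥ
    (Matrix.fromBlocks Q S Sᵀ R).mulVec (Sum.elim (w (s + j)) (z (s + j)))) T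

lemma dot_self_nonneg {k : ℕ} (v : Fin k → ℝ) : 0 ≤ v ⬝ᵥ v :=
  Finset.sum_nonneg fun i _ => mul_self_nonneg _

lemma tendsto_div_atTop (T : ℕ) (hT : 1 ≤ T) :
    Filter.Tendsto (fun N : ℕ => N / T) Filter.atTop Filter.atTop := by
  rw [Filter.tendsto_atTop_atTop]
  intro b
  exact ⟨b * T, fun n hn => (Nat.le_div_iff_mul_le (by omega)).mpr hn⟩

set_option maxHeartbeats 2000000 in
/-- The resetting closed loop satisfies quadratic performance specified by `P` if and
only if the lifted reset system `(Ã_r, B̃, C̃_r, D̃)` satisfies quadratic performance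
specified by `P̃`. -/
theorem reset_quadPerf_iff_lifted {n₁ n₂ m q : ℕ} (T : ℕ) (hT : 1 ≤ T)
    (A : Matrix (Fin n₁ ⊕ Fin n₂) (Fin n₁ ⊕ Fin n₂) ℝ)
    (B : Matrix (Fin n₁ ⊕ Fin n₂) (Fin m) ℝ)
    (C : Matrix (Fin q) (Fin n₁ ⊕ Fin n₂) ℝ) (D : Matrix (Fin q) (Fin m) ℝ)
    (Q : Matrix (Fin m) (Fin m) ℝ) (S : Matrix (Fin m) (Fin q) ℝ)
    (R : Matrix (Fin q) (Fin q) ℝ) (hQ : Q.IsSymm) (hR : R.IsSymm) :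
    ResetQuadPerf T A B C D (Matrix.fromBlocks Q S Sᵀ R) ↔
      QuadPerf (A ^ (T - 1) * Ar A) (Btil T A B) (Crtil T A C) (Dtil T A B C D)
        (Ptil T Q S R) := by
  have hTpos : 0 < T := hT
  constructor
  · rintro ⟨hstabR, ε, hε, hspecR⟩
    constructor
    · -- stability of the lifted system
      intro x hx
      obtain ⟨ξ, hξ00, hξ⟩ : ∃ ξ : ℕ → (Fin n₁ ⊕ Fin n₂) → ℝ, ξ 0 = x 0 ∧
          ∀ t, ξ (t + 1) = (if T ∣ t then Ar A else A).mulVec (ξ t) :=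
        ⟨fun t => Nat.rec (x 0) (fun t ih => (if T ∣ t then Ar A else A).mulVec ih) t,
          rfl, fun t => rfl⟩
      have hξ' : ∀ t, ξ (t + 1) = (if T ∣ t then Ar A else A).mulVec (ξ t) +
          B.mulVec ((fun _ : ℕ => (0 : Fin m → ℝ)) t) := by
        intro t; simp [hξ t]
      have hX : ∀ k, x k = ξ (k * T) := by
        intro k
        induction k with
        | zero => rw [Nat.zero_mul, hξ00]
        | succ k ih =>
          rw [hx k, ih, reset_state_mul T hT A B ξ _ hξ' k]
          have : (Btil T A B).mulVec
              (fun p => (fun _ : ℕ => (0 : Fin m → ℝ)) (k * T + (p.1 : ℕ)) p.2) = 0 := by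
            have : (fun p : Fin T × Fin m =>
                (fun _ : ℕ => (0 : Fin m → ℝ)) (k * T + (p.1 : ℕ)) p.2) = 0 := by
              funext p; rfl
            rw [this, Matrix.mulVec_zero]
          rw [this, add_zero]
      have hξ0 := hstabR ξ hξ
      have : Filter.Tendsto (fun k => ξ (k * T)) Filter.atTop (𝓝 0) :=
        hξ0.comp (tendsto_mul_atTop T hT)
      exact (funext hX : x = fun k => ξ (k * T)) ▸ this
    · -- performance of the lifted system
      refine ⟨ε, hε, fun x u y htraj hx0 hsumu => ?_⟩
      set w : ℕ → Fin m → ℝ :=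
        fun t a => u (t / T) (⟨t % T, Nat.mod_lt _ hTpos⟩, a) with hwdef
      have hwu : ∀ k (p : Fin T × Fin m), w (k * T + (p.1 : ℕ)) p.2 = u k p := by
        intro k p
        have hj : (p.1 : ℕ) < T := p.1.isLt
        have hdiv : (k * T + (p.1 : ℕ)) / T = k := by
          rw [add_comm, Nat.add_mul_div_right _ _ hTpos, Nat.div_eq_of_lt hj, zero_add]
        have hmodv : (k * T + (p.1 : ℕ)) % T = (p.1 : ℕ) := by
          rw [add_comm, Nat.add_mul_mod_self_right]
          exact Nat.mod_eq_of_lt hj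
        have hmod : (⟨(k * T + (p.1 : ℕ)) % T, Nat.mod_lt _ hTpos⟩ : Fin T) = p.1 :=
          Fin.ext hmodv
        show u ((k * T + (p.1 : ℕ)) / T)
          (⟨(k * T + (p.1 : ℕ)) % T, Nat.mod_lt _ hTpos⟩, p.2) = u k p
        simp only [hdiv, hmod, Prod.mk.eta]
      have hwtil : ∀ k, (fun p : Fin T × Fin m => w (k * T + (p.1 : ℕ)) p.2) = u k :=
        fun k => funext (hwu k)
      obtain ⟨ξ, hξ0, hξrec⟩ : ∃ ξ : ℕ → (Fin n₁ ⊕ Fin n₂) → ℝ, ξ 0 = 0 ∧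
          ∀ t, ξ (t + 1) = (if T ∣ t then Ar A else A).mulVec (ξ t) + B.mulVec (w t) :=
        ⟨fun t => Nat.rec (0 : (Fin n₁ ⊕ Fin n₂) → ℝ)
          (fun t ih => (if T ∣ t then Ar A else A).mulVec ih + B.mulVec (w t)) t,
          rfl, fun t => rfl⟩
      obtain ⟨z, hzrec⟩ : ∃ z : ℕ → Fin q → ℝ,
          ∀ t, z t = C.mulVec (ξ t) + D.mulVec (w t) := ⟨_, fun t => rfl⟩
      have hRT : ResetTraj T A B C D ξ w z := fun t => ⟨hξrec t, hzrec t⟩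
      have hX : ∀ k, ξ (k * T) = x k := by
        intro k
        induction k with
        | zero => rw [Nat.zero_mul, hξ0]; exact hx0.symm
        | succ k ih =>
          rw [reset_state_mul T hT A B ξ w hξrec k, ih, hwtil k]
          exact ((htraj k).1).symm
      have hY : ∀ k (p : Fin T × Fin q), y k p = z (k * T + (p.1 : ℕ)) p.2 := by
        intro k p
        have hro := reset_output T hT A B C D ξ w z hξrec hzrec k p
        rw [hX k, hwtil k] at hro
        rw [(htraj k).2]
        simp only [Pi.add_apply]
        exact hro.symm
      have hwnn : ∀ t, 0 ≤ w t ⬝ᵥ w t := fun t => dot_self_nonneg _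
      have hgroup := summable_grouped T hT (fun t => w t ⬝ᵥ w t) hwnn
      have huw : (fun k => ∑ j ∈ Finset.range T, w (k * T + j) ⬝ᵥ w (k * T + j)) =
          fun k => u k ⬝ᵥ u k := by
        funext k
        rw [← dot_group T w (k * T), hwtil k]
      have hsumw : Summable (fun t => w t ⬝ᵥ w t) := by
        refine hgroup.1.mpr ?_
        rw [huw]
        exact hsumu
      have htsum : ∑' k, u k ⬝ᵥ u k = ∑' t, w t ⬝ᵥ w t := by
        rw [← hgroup.2 hsumw, ← huw]
      obtain ⟨l, hl, hle⟩ := hspecR ξ w z hRT hξ0 hsumw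
      refine ⟨l, ?_, ?_⟩
      · have hterm : ∀ k, Sum.elim (u k) (y k) ⬝ᵥ (Ptil T Q S R).mulVec
            (Sum.elim (u k) (y k)) =
            ∑ j ∈ Finset.range T, Sum.elim (w (k * T + j)) (z (k * T + j)) ⬝ᵥ
              (Matrix.fromBlocks Q S Sᵀ R).mulVec
                (Sum.elim (w (k * T + j)) (z (k * T + j))) := by
          intro k
          rw [← Ptil_term T Q S R w z (k * T), ← hwtil k,
            show y k = fun p : Fin T × Fin q => z (k * T + (p.1 : ℕ)) p.2 from funext (hY k)]
        have hps : (fun K => ∑ k ∈ Finset.range K, Sum.elim (u k) (y k) ⬝ᵥ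
            (Ptil T Q S R).mulVec (Sum.elim (u k) (y k))) =
            fun K => ∑ t ∈ Finset.range (K * T), Sum.elim (w t) (z t) ⬝ᵥ
              (Matrix.fromBlocks Q S Sᵀ R).mulVec (Sum.elim (w t) (z t)) := by
          funext K
          rw [Finset.sum_congr rfl (fun k _ => hterm k)]
          exact sum_grouped T (fun t => Sum.elim (w t) (z t) ⬝ᵥ
            (Matrix.fromBlocks Q S Sᵀ R).mulVec (Sum.elim (w t) (z t))) K
        rw [hps]
        exact hl.comp (tendsto_mul_atTop T hT)
      · rw [htsum]
        exact hle
  · rintro ⟨hstabL, ε, hε, hspecL⟩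
    constructor
    · -- stability of the reset loop
      intro ξ hξ
      have hξ' : ∀ t, ξ (t + 1) = (if T ∣ t then Ar A else A).mulVec (ξ t) +
          B.mulVec ((fun _ : ℕ => (0 : Fin m → ℝ)) t) := by
        intro t; simp [hξ t]
      have hBtil0 : ∀ k : ℕ, (Btil T A B).mulVec
          (fun p : Fin T × Fin m => (fun _ : ℕ => (0 : Fin m → ℝ)) (k * T + (p.1 : ℕ)) p.2)
            = 0 := by
        intro k
        have h0 : (fun p : Fin T × Fin m =>
            (fun _ : ℕ => (0 : Fin m → ℝ)) (k * T + (p.1 : ℕ)) p.2) = 0 := by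
          funext p; rfl
        rw [h0, Matrix.mulVec_zero]
      have hx : ∀ k : ℕ, ξ ((k + 1) * T) = (A ^ (T - 1) * Ar A).mulVec (ξ (k * T)) := by
        intro k
        rw [reset_state_mul T hT A B ξ _ hξ' k, hBtil0 k, add_zero]
      have hx0 : Filter.Tendsto (fun k => ξ (k * T)) Filter.atTop (𝓝 0) :=
        hstabL (fun k => ξ (k * T)) hx
      refine tendsto_of_residues T hT ξ 0 fun j hj => ?_
      rcases Nat.eq_zero_or_pos j with rfl | hjpos
      · simpa using hx0
      · have hform : ∀ k, ξ (k * T + j) = (A ^ (j - 1) * Ar A).mulVec (ξ (k * T)) := by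
          intro k
          rw [reset_state T hT A B ξ _ hξ' k j hjpos (le_of_lt hj)]
          simp [Matrix.mulVec_zero]
        have hcont : Continuous (fun v : (Fin n₁ ⊕ Fin n₂) → ℝ =>
            (A ^ (j - 1) * Ar A).mulVec v) :=
          ((A ^ (j - 1) * Ar A).mulVecLin).continuous_of_finiteDimensional
        have htd := (hcont.tendsto 0).comp hx0
        rw [show (fun k => ξ (k * T + j)) = fun k =>
          (A ^ (j - 1) * Ar A).mulVec (ξ (k * T)) from funext hform]
        simpa [Matrix.mulVec_zero, Function.comp_def] using htd
    · -- performance of the reset loop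
      refine ⟨ε, hε, fun ξ w z hRT hξ0 hsumw => ?_⟩
      have hξrec : ∀ t, ξ (t + 1) = (if T ∣ t then Ar A else A).mulVec (ξ t) +
          B.mulVec (w t) := fun t => (hRT t).1
      have hzrec : ∀ t, z t = C.mulVec (ξ t) + D.mulVec (w t) := fun t => (hRT t).2
      have hwnn : ∀ t, 0 ≤ w t ⬝ᵥ w t := fun t => dot_self_nonneg _
      have hgroup := summable_grouped T hT (fun t => w t ⬝ᵥ w t) hwnn
      have huw : (fun k => ∑ j ∈ Finset.range T, w (k * T + j) ⬝ᵥ w (k * T + j)) =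
          fun k => (fun p : Fin T × Fin m => w (k * T + (p.1 : ℕ)) p.2) ⬝ᵥ
            (fun p : Fin T × Fin m => w (k * T + (p.1 : ℕ)) p.2) := by
        funext k
        rw [← dot_group T w (k * T)]
      have hsumu : Summable (fun k => (fun p : Fin T × Fin m => w (k * T + (p.1 : ℕ)) p.2) ⬝ᵥ
          (fun p : Fin T × Fin m => w (k * T + (p.1 : ℕ)) p.2)) := by
        rw [← huw]
        exact hgroup.1.mp hsumw
      have htsum : (∑' k, (fun p : Fin T × Fin m => w (k * T + (p.1 : ℕ)) p.2) ⬝ᵥ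
          (fun p : Fin T × Fin m => w (k * T + (p.1 : ℕ)) p.2)) = ∑' t, w t ⬝ᵥ w t := by
        rw [← hgroup.2 hsumw, huw]
      have hIT : IsTraj (A ^ (T - 1) * Ar A) (Btil T A B) (Crtil T A C) (Dtil T A B C D)
          (fun k => ξ (k * T))
          (fun k => fun p : Fin T × Fin m => w (k * T + (p.1 : ℕ)) p.2)
          (fun k => fun p : Fin T × Fin q => z (k * T + (p.1 : ℕ)) p.2) := by
        intro k
        constructor
        · exact reset_state_mul T hT A B ξ w hξrec k
        · funext p
          rw [Pi.add_apply]
          exact reset_output T hT A B C D ξ w z hξrec hzrec k p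
      have hx00 : (fun k => ξ (k * T)) 0 = 0 := by
        show ξ (0 * T) = 0
        rw [Nat.zero_mul]
        exact hξ0
      obtain ⟨l, hl, hle⟩ := hspecL (fun k => ξ (k * T))
        (fun k => fun p : Fin T × Fin m => w (k * T + (p.1 : ℕ)) p.2)
        (fun k => fun p : Fin T × Fin q => z (k * T + (p.1 : ℕ)) p.2) hIT hx00 hsumu
      refine ⟨l, ?_, ?_⟩
      · -- full convergence of partial sums
        have hw0 : Filter.Tendsto w Filter.atTop (𝓝 0) := input_tendsto_zero w hsumw
        have hstab' : ∀ v : (Fin n₁ ⊕ Fin n₂) → ℝ,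
            Filter.Tendsto (fun k => ((A ^ (T - 1) * Ar A) ^ k).mulVec v)
              Filter.atTop (𝓝 0) := by
          intro v
          refine hstabL (fun k => ((A ^ (T - 1) * Ar A) ^ k).mulVec v) fun k => ?_
          show ((A ^ (T - 1) * Ar A) ^ (k + 1)).mulVec v =
            (A ^ (T - 1) * Ar A).mulVec (((A ^ (T - 1) * Ar A) ^ k).mulVec v)
          rw [pow_succ', ← Matrix.mulVec_mulVec]
        have hwshift : ∀ i : ℕ, Filter.Tendsto (fun k : ℕ => w (k * T + i))
            Filter.atTop (𝓝 0) := by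
          intro i
          refine hw0.comp (Filter.tendsto_atTop_mono (fun k => ?_) Filter.tendsto_id)
          calc (k : ℕ) ≤ k * T := Nat.le_mul_of_pos_right k hTpos
            _ ≤ k * T + i := Nat.le_add_right _ _
        have hu0 : Filter.Tendsto
            (fun k => fun p : Fin T × Fin m => w (k * T + (p.1 : ℕ)) p.2)
            Filter.atTop (𝓝 0) := by
          rw [tendsto_pi_nhds]
          intro p
          have hwc : Filter.Tendsto (fun k : ℕ => w (k * T + (p.1 : ℕ)) p.2)
              Filter.atTop (𝓝 0) := by
            have := tendsto_pi_nhds.mp (hwshift (p.1 : ℕ)) p.2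
            simpa using this
          simpa using hwc
        have hX0 : Filter.Tendsto (fun k => ξ (k * T)) Filter.atTop (𝓝 0) :=
          state_tendsto_zero (A ^ (T - 1) * Ar A) (Btil T A B) hstab' _ hu0
            (fun k => ξ (k * T)) (fun k => (hIT k).1)
        have hξt0 : Filter.Tendsto ξ Filter.atTop (𝓝 0) := by
          refine tendsto_of_residues T hT ξ 0 fun j hj => ?_
          rcases Nat.eq_zero_or_pos j with rfl | hjpos
          · simpa using hX0
          · have hform : ∀ k, ξ (k * T + j) = (A ^ (j - 1) * Ar A).mulVec (ξ (k * T)) +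
                ∑ i ∈ Finset.range j, (A ^ (j - 1 - i) * B).mulVec (w (k * T + i)) :=
              fun k => reset_state T hT A B ξ w hξrec k j hjpos (le_of_lt hj)
            rw [show (fun k => ξ (k * T + j)) = fun k =>
              (A ^ (j - 1) * Ar A).mulVec (ξ (k * T)) +
                ∑ i ∈ Finset.range j, (A ^ (j - 1 - i) * B).mulVec (w (k * T + i))
              from funext hform]
            have h1 : Filter.Tendsto (fun k => (A ^ (j - 1) * Ar A).mulVec (ξ (k * T)))
                Filter.atTop (𝓝 0) := by
              have hcont : Continuous (fun v : (Fin n₁ ⊕ Fin n₂) → ℝ =>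
                  (A ^ (j - 1) * Ar A).mulVec v) :=
                ((A ^ (j - 1) * Ar A).mulVecLin).continuous_of_finiteDimensional
              have := (hcont.tendsto 0).comp hX0
              simpa [Matrix.mulVec_zero, Function.comp_def] using this
            have h2 : Filter.Tendsto (fun k => ∑ i ∈ Finset.range j,
                (A ^ (j - 1 - i) * B).mulVec (w (k * T + i))) Filter.atTop (𝓝 0) := by
              have : ∀ i ∈ Finset.range j, Filter.Tendsto
                  (fun k => (A ^ (j - 1 - i) * B).mulVec (w (k * T + i)))
                  Filter.atTop (𝓝 0) := by
                intro i _
                have hcont : Continuous (fun v : Fin m → ℝ =>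
                    (A ^ (j - 1 - i) * B).mulVec v) :=
                  ((A ^ (j - 1 - i) * B).mulVecLin).continuous_of_finiteDimensional
                have := (hcont.tendsto 0).comp (hwshift i)
                simpa [Matrix.mulVec_zero, Function.comp_def] using this
              have := tendsto_finset_sum (Finset.range j) this
              simpa using this
            have := h1.add h2
            simpa using this
        have hz0 : Filter.Tendsto z Filter.atTop (𝓝 0) := by
          have hc1 : Continuous (fun v : (Fin n₁ ⊕ Fin n₂) → ℝ => C.mulVec v) :=
            (C.mulVecLin).continuous_of_finiteDimensional
          have hc2 : Continuous (fun v : Fin m → ℝ => D.mulVec v) :=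
            (D.mulVecLin).continuous_of_finiteDimensional
          have := ((hc1.tendsto 0).comp hξt0).add ((hc2.tendsto 0).comp hw0)
          rw [show z = fun t => C.mulVec (ξ t) + D.mulVec (w t) from funext hzrec]
          simpa [Matrix.mulVec_zero, Function.comp_def] using this
        have hterm0 : Filter.Tendsto (fun t => Sum.elim (w t) (z t) ⬝ᵥ
            (Matrix.fromBlocks Q S Sᵀ R).mulVec (Sum.elim (w t) (z t)))
            Filter.atTop (𝓝 0) := by
          have hcont : Continuous (fun v : (Fin m ⊕ Fin q) → ℝ =>
              v ⬝ᵥ (Matrix.fromBlocks Q S Sᵀ R).mulVec v) := by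
            simp only [dotProduct, Matrix.mulVec]
            fun_prop
          have hv0 : Filter.Tendsto (fun t => Sum.elim (w t) (z t)) Filter.atTop (𝓝 0) := by
            rw [tendsto_pi_nhds]
            rintro (a | b)
            · simpa using tendsto_pi_nhds.mp hw0 a
            · simpa using tendsto_pi_nhds.mp hz0 b
          have := (hcont.tendsto 0).comp hv0
          simpa [zero_dotProduct, Function.comp_def] using this
        have hterm : ∀ k, Sum.elim ((fun k => fun p : Fin T × Fin m =>
              w (k * T + (p.1 : ℕ)) p.2) k) ((fun k => fun p : Fin T × Fin q =>
              z (k * T + (p.1 : ℕ)) p.2) k) ⬝ᵥ (Ptil T Q S R).mulVec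
              (Sum.elim ((fun k => fun p : Fin T × Fin m => w (k * T + (p.1 : ℕ)) p.2) k)
                ((fun k => fun p : Fin T × Fin q => z (k * T + (p.1 : ℕ)) p.2) k)) =
            ∑ j ∈ Finset.range T, Sum.elim (w (k * T + j)) (z (k * T + j)) ⬝ᵥ
              (Matrix.fromBlocks Q S Sᵀ R).mulVec
                (Sum.elim (w (k * T + j)) (z (k * T + j))) :=
          fun k => Ptil_term T Q S R w z (k * T)
        have hps : (fun K => ∑ k ∈ Finset.range K,
            Sum.elim ((fun k => fun p : Fin T × Fin m => w (k * T + (p.1 : ℕ)) p.2) k)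
              ((fun k => fun p : Fin T × Fin q => z (k * T + (p.1 : ℕ)) p.2) k) ⬝ᵥ
              (Ptil T Q S R).mulVec
                (Sum.elim ((fun k => fun p : Fin T × Fin m => w (k * T + (p.1 : ℕ)) p.2) k)
                  ((fun k => fun p : Fin T × Fin q => z (k * T + (p.1 : ℕ)) p.2) k))) =
            fun K => ∑ t ∈ Finset.range (K * T), Sum.elim (w t) (z t) ⬝ᵥ
              (Matrix.fromBlocks Q S Sᵀ R).mulVec (Sum.elim (w t) (z t)) := by
          funext K
          rw [Finset.sum_congr rfl (fun k _ => hterm k)]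
          exact sum_grouped T (fun t => Sum.elim (w t) (z t) ⬝ᵥ
            (Matrix.fromBlocks Q S Sᵀ R).mulVec (Sum.elim (w t) (z t))) K
        rw [hps] at hl
        have h1 : Filter.Tendsto (fun N => ∑ t ∈ Finset.range (N / T * T),
            Sum.elim (w t) (z t) ⬝ᵥ (Matrix.fromBlocks Q S Sᵀ R).mulVec
              (Sum.elim (w t) (z t))) Filter.atTop (𝓝 l) :=
          hl.comp (tendsto_div_atTop T hT)
        have h2 : Filter.Tendsto (fun N => ∑ j ∈ Finset.range (N % T),
            Sum.elim (w (N / T * T + j)) (z (N / T * T + j)) ⬝ᵥ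
              (Matrix.fromBlocks Q S Sᵀ R).mulVec
                (Sum.elim (w (N / T * T + j)) (z (N / T * T + j))))
            Filter.atTop (𝓝 0) := by
          rw [Metric.tendsto_atTop]
          intro δ hδ
          have hδ' : 0 < δ / (T + 1) := by positivity
          obtain ⟨N₀, hN₀⟩ := Metric.tendsto_atTop.mp hterm0 (δ / (T + 1)) hδ'
          refine ⟨N₀ + T, fun N hN => ?_⟩
          rw [Real.dist_eq, sub_zero]
          have e1 : N / T * T + N % T = N := Nat.div_add_mod' N T
          have e2 : N % T < T := Nat.mod_lt _ hTpos
          have e3 : N₀ ≤ N / T * T := by omega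
          have hb : ∀ j ∈ Finset.range (N % T),
              |Sum.elim (w (N / T * T + j)) (z (N / T * T + j)) ⬝ᵥ
                (Matrix.fromBlocks Q S Sᵀ R).mulVec
                  (Sum.elim (w (N / T * T + j)) (z (N / T * T + j)))| ≤ δ / (T + 1) := by
            intro j _
            have := hN₀ (N / T * T + j) (le_trans e3 (Nat.le_add_right _ _))
            rw [Real.dist_eq, sub_zero] at this
            exact le_of_lt this
          calc |∑ j ∈ Finset.range (N % T), Sum.elim (w (N / T * T + j)) (z (N / T * T + j)) ⬝ᵥ
                (Matrix.fromBlocks Q S Sᵀ R).mulVec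
                  (Sum.elim (w (N / T * T + j)) (z (N / T * T + j)))|
              ≤ ∑ j ∈ Finset.range (N % T), |Sum.elim (w (N / T * T + j)) (z (N / T * T + j)) ⬝ᵥ
                (Matrix.fromBlocks Q S Sᵀ R).mulVec
                  (Sum.elim (w (N / T * T + j)) (z (N / T * T + j)))| :=
                Finset.abs_sum_le_sum_abs _ _
            _ ≤ ∑ _j ∈ Finset.range (N % T), δ / (T + 1) := Finset.sum_le_sum hb
            _ = ((N % T : ℕ) : ℝ) * (δ / (T + 1)) := by
                rw [Finset.sum_const, Finset.card_range, nsmul_eq_mul]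
            _ < δ := by
                have hle2 : ((N % T : ℕ) : ℝ) ≤ (T : ℝ) := by exact_mod_cast le_of_lt e2
                have hTcast : (0:ℝ) < (T:ℝ) + 1 := by positivity
                rw [div_eq_mul_inv]
                calc ((N % T : ℕ) : ℝ) * (δ * ((T:ℝ) + 1)⁻¹)
                    ≤ (T : ℝ) * (δ * ((T:ℝ) + 1)⁻¹) := by
                      apply mul_le_mul_of_nonneg_right hle2
                      positivity
                  _ < δ := by
                      rw [mul_comm δ _, ← mul_assoc, ← div_eq_mul_inv]
                      rw [div_mul_eq_mul_div, mul_comm]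
                      rw [div_lt_iff₀ hTcast]
                      nlinarith
        have hsum3 := h1.add h2
        rw [add_zero] at hsum3
        have hdecomp : (fun N => ∑ t ∈ Finset.range N, Sum.elim (w t) (z t) ⬝ᵥ
            (Matrix.fromBlocks Q S Sᵀ R).mulVec (Sum.elim (w t) (z t))) =
            fun N => (∑ t ∈ Finset.range (N / T * T), Sum.elim (w t) (z t) ⬝ᵥ
              (Matrix.fromBlocks Q S Sᵀ R).mulVec (Sum.elim (w t) (z t))) +
              ∑ j ∈ Finset.range (N % T), Sum.elim (w (N / T * T + j)) (z (N / T * T + j)) ⬝ᵥ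
                (Matrix.fromBlocks Q S Sᵀ R).mulVec
                  (Sum.elim (w (N / T * T + j)) (z (N / T * T + j))) := by
          funext N
          conv_lhs => rw [show N = N / T * T + N % T from (Nat.div_add_mod' N T).symm]
          exact Finset.sum_range_add _ (N / T * T) (N % T)
        rw [hdecomp]
        exact hsum3
      · rw [← htsum]
        exact hle
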